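/- The Laplacian maps the space of homogeneous polynomials of degree m in n variables onto the space of homogeneous polynomials of degree m-2, and hence dim H_m(ℝ^n) = binomial(n+m-1, n-1) - binomial(n+m-3, n-1), where H_m(ℝ^n) is the space of harmonic homogeneous polynomials of degree m. -/

import Mathlib

open MvPolynomial

/-- The polynomial Laplacian `Δ = ∑ i ∂²/∂xᵢ²` on polynomials in `n` variables. -/
noncomputable def polyLaplacian (n : ℕ) :
    MvPolynomial (Fin n) ℂ →ₗ[ℂ] MvPolynomial (Fin n) ℂ :=
  ∑ i : Fin n, (pderiv i).toLinearMap ∘ₗ (pderiv i).toLinearMap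

/-! ### Auxiliary lemmas -/

lemma deg_add' {n : ℕ} (a b : Fin n →₀ ℕ) :
    Finsupp.degree (a + b) = Finsupp.degree a + Finsupp.degree b := by
  rw [Finsupp.degree_eq_weight_one]; exact map_add _ a b

lemma deg_single' {n : ℕ} (i : Fin n) (k : ℕ) :
    Finsupp.degree (Finsupp.single i k) = k := by
  rcases Nat.eq_zero_or_pos k with h | h
  · simp [h]
  · exact Finsupp.degree_single i k

lemma two_le_degree' {n : ℕ} (d : Fin n →₀ ℕ) {i j : Fin n} (hij : i ≠ j) :
    d i + d j ≤ Finsupp.degree d := by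
  by_cases hi : d i = 0
  · simp only [hi, zero_add]; exact Finsupp.le_degree j d
  by_cases hj : d j = 0
  · simp only [hj, add_zero]; exact Finsupp.le_degree i d
  have hsub : ({i, j} : Finset (Fin n)) ⊆ d.support := by
    intro x hx
    simp only [Finset.mem_insert, Finset.mem_singleton] at hx
    rcases hx with rfl | rfl <;> simpa [Finsupp.mem_support_iff]
  calc d i + d j = ∑ x ∈ ({i, j} : Finset (Fin n)), d x := (Finset.sum_pair hij).symm
    _ ≤ ∑ x ∈ d.support, d x := Finset.sum_le_sum_of_subset hsub
    _ = Finsupp.degree d := rfl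

lemma pderiv_mem' {n d : ℕ} (i : Fin n) {p : MvPolynomial (Fin n) ℂ}
    (hp : p ∈ homogeneousSubmodule (Fin n) ℂ d) :
    pderiv i p ∈ homogeneousSubmodule (Fin n) ℂ (d - 1) := by
  have hrepr : pderiv i p = ∑ c ∈ p.support, pderiv i (monomial c (coeff c p)) := by
    rw [← map_sum, p.support_sum_monomial_coeff]
  rw [hrepr]
  apply Submodule.sum_mem
  intro c hc
  rw [pderiv_monomial]
  by_cases h : c i = 0
  · simp [h]
  · apply (mem_homogeneousSubmodule _ _).2
    apply isHomogeneous_monomial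
    have hd : Finsupp.degree c = d := by
      have := hp (mem_support_iff.1 hc)
      rwa [Finsupp.degree_eq_weight_one]
    have h1 : (c - Finsupp.single i 1) + Finsupp.single i 1 = c :=
      tsub_add_cancel_of_le (by rwa [Finsupp.single_le_iff, Nat.one_le_iff_ne_zero])
    have := deg_add' (c - Finsupp.single i 1) (Finsupp.single i 1)
    rw [h1, hd, deg_single'] at this
    omega

lemma laplacian_mem' {n m : ℕ} {p : MvPolynomial (Fin n) ℂ}
    (hp : p ∈ homogeneousSubmodule (Fin n) ℂ m) :
    polyLaplacian n p ∈ homogeneousSubmodule (Fin n) ℂ (m - 2) := by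
  rw [polyLaplacian, LinearMap.sum_apply]
  apply Submodule.sum_mem
  intro i _
  have h2 : m - 1 - 1 = m - 2 := by omega
  have := pderiv_mem' i (pderiv_mem' i hp)
  rw [h2] at this
  simpa using this

/-! ### Dimension of the homogeneous submodule -/

noncomputable def homEquivFinsupp (n d : ℕ) : (homogeneousSubmodule (Fin n) ℂ d) ≃ₗ[ℂ]
    ({α : Fin n →₀ ℕ // Finsupp.degree α = d} →₀ ℂ) := by
  rw [homogeneousSubmodule_eq_finsupp_supported]
  exact AddMonoidAlgebra.supportedEquivFinsupp _

noncomputable def degreeSymEquiv (n d : ℕ) : {α : Fin n →₀ ℕ // Finsupp.degree α = d} ≃ Sym (Fin n) d where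
  toFun α := ⟨Finsupp.toMultiset α.1, by
    have h : Multiset.card (Finsupp.toMultiset α.1) = Finsupp.degree α.1 := by
      rw [Finsupp.card_toMultiset]; rfl
    rw [h, α.2]⟩
  invFun s := ⟨Multiset.toFinsupp s.1, by
    have h : Multiset.card (Finsupp.toMultiset (Multiset.toFinsupp s.1))
        = Finsupp.degree (Multiset.toFinsupp s.1) := by
      rw [Finsupp.card_toMultiset]; rfl
    rw [← h, Multiset.toFinsupp_toMultiset, s.2]⟩
  left_inv α := by ext1; simp
  right_inv s := by ext1; simp

noncomputable instance (n d : ℕ) : Fintype {α : Fin n →₀ ℕ // Finsupp.degree α = d} :=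
  Fintype.ofEquiv _ (degreeSymEquiv n d).symm

lemma card_degree_eq (n d : ℕ) :
    Fintype.card {α : Fin n →₀ ℕ // Finsupp.degree α = d} = (n + d - 1).choose d := by
  rw [Fintype.card_congr (degreeSymEquiv n d), Sym.card_sym_eq_choose, Fintype.card_fin]

instance (n d : ℕ) : FiniteDimensional ℂ (homogeneousSubmodule (Fin n) ℂ d) :=
  Module.Finite.equiv ((homEquivFinsupp n d).trans (Finsupp.linearEquivFunOnFinite ℂ ℂ _)).symm

lemma finrank_hs (n d : ℕ) :
    Module.finrank ℂ (homogeneousSubmodule (Fin n) ℂ d) = (n + d - 1).choose d := by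
  rw [((homEquivFinsupp n d).trans (Finsupp.linearEquivFunOnFinite ℂ ℂ _)).finrank_eq,
    Module.finrank_fintype_fun_eq_card, card_degree_eq]

/-! ### Surjectivity -/

lemma monomial_mem_image (n m : ℕ) (hn : 0 < n) (hm : 2 ≤ m) :
    ∀ (k : ℕ) (d : Fin n →₀ ℕ), Finsupp.degree d = m - 2 → m - 2 - d ⟨0, hn⟩ = k →
      (monomial d 1 : MvPolynomial (Fin n) ℂ) ∈
        (homogeneousSubmodule (Fin n) ℂ m).map (polyLaplacian n) := by
  intro k
  induction k using Nat.strong_induction_on with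
  | _ k ih =>
  intro d hdeg hk
  set z : Fin n := ⟨0, hn⟩ with hz
  set e : Fin n →₀ ℕ := d + Finsupp.single z 2 with he
  have hez : e z = d z + 2 := by simp [he]
  have hdegE : Finsupp.degree e = m := by
    rw [he, deg_add', deg_single', hdeg]; omega
  have hmemE : (monomial e 1 : MvPolynomial (Fin n) ℂ) ∈ homogeneousSubmodule (Fin n) ℂ m :=
    isHomogeneous_monomial _ hdegE
  -- the image submodule
  set S := (homogeneousSubmodule (Fin n) ℂ m).map (polyLaplacian n) with hS
  have hΔ : polyLaplacian n (monomial e 1) ∈ S := Submodule.mem_map_of_mem hmemE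
  -- compute the Laplacian of the monomial
  have hcomp : polyLaplacian n (monomial e 1 : MvPolynomial (Fin n) ℂ)
      = ∑ i : Fin n, (monomial (e - Finsupp.single i 1 - Finsupp.single i 1)
          (((e i : ℂ)) * ((e i - 1 : ℕ) : ℂ))) := by
    rw [polyLaplacian, LinearMap.sum_apply]
    apply Finset.sum_congr rfl
    intro i _
    simp [pderiv_monomial, Finsupp.tsub_apply]
  -- the term at z
  have htermz : (e - Finsupp.single z 1 - Finsupp.single z 1 : Fin n →₀ ℕ) = d := by
    rw [tsub_tsub, ← Finsupp.single_add]
    exact add_tsub_cancel_right d (Finsupp.single z 2)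
  have hcoefz : ((e z : ℂ)) * ((e z - 1 : ℕ) : ℂ)
      = ((d z + 2 : ℕ) : ℂ) * ((d z + 1 : ℕ) : ℂ) := by
    rw [hez]
    norm_num
  -- the other terms are in S
  have hother : ∀ i ∈ (Finset.univ.erase z),
      (monomial (e - Finsupp.single i 1 - Finsupp.single i 1)
        (((e i : ℂ)) * ((e i - 1 : ℕ) : ℂ)) : MvPolynomial (Fin n) ℂ) ∈ S := by
    intro i hi
    have hiz : i ≠ z := Finset.ne_of_mem_erase hi
    have hei : e i = d i := by simp [he, Finsupp.single_eq_of_ne' (Ne.symm hiz)]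
    by_cases hdi : d i ≤ 1
    · have h01 : e i = 0 ∨ e i = 1 := by omega
      have : ((e i : ℂ)) * ((e i - 1 : ℕ) : ℂ) = 0 := by
        rcases h01 with h | h <;> simp [h]
      rw [this, monomial_zero]
      exact Submodule.zero_mem S
    · push_neg at hdi
      -- d i ≥ 2
      set d' : Fin n →₀ ℕ := e - Finsupp.single i 2 with hd'
      have hle : Finsupp.single i 2 ≤ e := by
        rw [Finsupp.single_le_iff, hei]; omega
      have hrecomb : d' + Finsupp.single i 2 = e := tsub_add_cancel_of_le hle
      have htt : (e - Finsupp.single i 1 - Finsupp.single i 1 : Fin n →₀ ℕ) = d' := by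
        rw [tsub_tsub, ← Finsupp.single_add]
      have hdegd' : Finsupp.degree d' = m - 2 := by
        have := deg_add' d' (Finsupp.single i 2)
        rw [hrecomb, hdegE, deg_single'] at this
        omega
      have hd'z : d' z = d z + 2 := by
        rw [hd', Finsupp.tsub_apply, Finsupp.single_eq_of_ne' hiz, hez]
        omega
      -- bound to apply induction
      have hbound : d z + d i ≤ m - 2 := by
        rw [← hdeg]; exact two_le_degree' d (Ne.symm hiz)
      have hlt : m - 2 - d' z < k := by rw [hd'z]; omega
      have hmono := ih _ hlt d' hdegd' rfl
      rw [htt]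
      have : (monomial d' (((e i : ℂ)) * ((e i - 1 : ℕ) : ℂ))
          : MvPolynomial (Fin n) ℂ)
          = (((e i : ℂ)) * ((e i - 1 : ℕ) : ℂ)) • monomial d' 1 := by
        rw [smul_monomial, smul_eq_mul, mul_one]
      rw [this]
      exact Submodule.smul_mem S _ hmono
  -- assemble
  have hsplit : polyLaplacian n (monomial e 1 : MvPolynomial (Fin n) ℂ)
      = (monomial d (((d z + 2 : ℕ) : ℂ) * ((d z + 1 : ℕ) : ℂ)))
        + ∑ i ∈ Finset.univ.erase z,
            (monomial (e - Finsupp.single i 1 - Finsupp.single i 1)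
              (((e i : ℂ)) * ((e i - 1 : ℕ) : ℂ))) := by
    rw [hcomp, ← Finset.add_sum_erase _ _ (Finset.mem_univ z), htermz, hcoefz]
  have hsumS : (∑ i ∈ Finset.univ.erase z,
      (monomial (e - Finsupp.single i 1 - Finsupp.single i 1)
        (((e i : ℂ)) * ((e i - 1 : ℕ) : ℂ))
          : MvPolynomial (Fin n) ℂ)) ∈ S :=
    Submodule.sum_mem S hother
  have hmonod : (monomial d (((d z + 2 : ℕ) : ℂ) * ((d z + 1 : ℕ) : ℂ))
      : MvPolynomial (Fin n) ℂ) ∈ S := by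
    have := Submodule.sub_mem S hΔ hsumS
    rwa [hsplit, add_sub_cancel_right] at this
  have hc0 : (((d z + 2 : ℕ) : ℂ) * ((d z + 1 : ℕ) : ℂ)) ≠ 0 :=
    mul_ne_zero (Nat.cast_ne_zero.2 (by omega)) (Nat.cast_ne_zero.2 (by omega))
  have := Submodule.smul_mem S ((((d z + 2 : ℕ) : ℂ) * ((d z + 1 : ℕ) : ℂ))⁻¹) hmonod
  rwa [smul_monomial, smul_eq_mul, inv_mul_cancel₀ hc0] at this

lemma laplacian_surj (n m : ℕ) (hn : 0 < n) (hm : 2 ≤ m) :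
    ∀ q ∈ homogeneousSubmodule (Fin n) ℂ (m - 2),
      ∃ p ∈ homogeneousSubmodule (Fin n) ℂ m, polyLaplacian n p = q := by
  intro q hq
  have hmem : q ∈ (homogeneousSubmodule (Fin n) ℂ m).map (polyLaplacian n) := by
    rw [← q.support_sum_monomial_coeff]
    apply Submodule.sum_mem
    intro c hc
    have hdc : Finsupp.degree c = m - 2 := by
      have := hq (mem_support_iff.1 hc)
      rwa [Finsupp.degree_eq_weight_one]
    have h1 : (monomial c 1 : MvPolynomial (Fin n) ℂ) ∈
        (homogeneousSubmodule (Fin n) ℂ m).map (polyLaplacian n) :=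
      monomial_mem_image n m hn hm _ c hdc rfl
    have : (monomial c (coeff c q) : MvPolynomial (Fin n) ℂ) = coeff c q • monomial c 1 := by
      rw [smul_monomial, smul_eq_mul, mul_one]
    rw [this]
    exact Submodule.smul_mem _ _ h1
  rcases Submodule.mem_map.1 hmem with ⟨p, hp, hpq⟩
  exact ⟨p, hp, hpq⟩

/-- The Laplacian maps homogeneous polynomials of degree `m` onto those of
degree `m-2`, and hence the space `H_m` of harmonic homogeneous polynomials of degree `m`
has dimension `C(n+m-1, n-1) - C(n+m-3, n-1)`. -/
theorem laplacian_surjective_and_dim_harmonic (n m : ℕ) (hn : 0 < n) (hm : 2 ≤ m) :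
    (∀ p ∈ homogeneousSubmodule (Fin n) ℂ m,
        polyLaplacian n p ∈ homogeneousSubmodule (Fin n) ℂ (m - 2)) ∧
    (∀ q ∈ homogeneousSubmodule (Fin n) ℂ (m - 2),
        ∃ p ∈ homogeneousSubmodule (Fin n) ℂ m, polyLaplacian n p = q) ∧
    Module.finrank ℂ
        ↥(homogeneousSubmodule (Fin n) ℂ m ⊓ LinearMap.ker (polyLaplacian n))
      = (n + m - 1).choose (n - 1) - (n + m - 3).choose (n - 1) := by
  refine ⟨fun p hp => laplacian_mem' hp, laplacian_surj n m hn hm, ?_⟩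
  set V := homogeneousSubmodule (Fin n) ℂ m
  set W := homogeneousSubmodule (Fin n) ℂ (m - 2)
  have hmap : ∀ x ∈ V, polyLaplacian n x ∈ W := fun x hx => laplacian_mem' hx
  set f : V →ₗ[ℂ] W := (polyLaplacian n).restrict hmap with hf
  have hsurj : Function.Surjective f := by
    rintro ⟨q, hq⟩
    rcases laplacian_surj n m hn hm q hq with ⟨p, hp, hpq⟩
    exact ⟨⟨p, hp⟩, Subtype.ext (by simpa [hf, LinearMap.restrict_apply] using hpq)⟩
  have hrange : LinearMap.range f = ⊤ := LinearMap.range_eq_top.2 hsurj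
  have hrn := LinearMap.finrank_range_add_finrank_ker f
  rw [hrange, finrank_top] at hrn
  -- identify the kernel
  have hker : LinearMap.ker f = Submodule.comap V.subtype (V ⊓ LinearMap.ker (polyLaplacian n)) := by
    ext x
    simp only [LinearMap.mem_ker, Submodule.mem_comap, Submodule.coe_subtype, Submodule.mem_inf]
    constructor
    · intro h
      refine ⟨x.2, ?_⟩
      have : (f x : MvPolynomial (Fin n) ℂ) = 0 := by rw [h]; rfl
      simpa [hf, LinearMap.restrict_apply] using this
    · rintro ⟨-, h⟩
      apply Subtype.ext
      simpa [hf, LinearMap.restrict_apply] using h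
  have hkerrank : Module.finrank ℂ (LinearMap.ker f)
      = Module.finrank ℂ ↥(V ⊓ LinearMap.ker (polyLaplacian n)) := by
    rw [hker]
    exact (Submodule.comapSubtypeEquivOfLe inf_le_left).finrank_eq
  have hV : Module.finrank ℂ V = (n + m - 1).choose m := finrank_hs n m
  have hW : Module.finrank ℂ W = (n + m - 3).choose (m - 2) := by
    have := finrank_hs n (m - 2)
    have h3 : n + (m - 2) - 1 = n + m - 3 := by omega
    rwa [h3] at this
  have h1 : (n + m - 1).choose m = (n + m - 1).choose (n - 1) := by
    rw [← Nat.choose_symm (by omega : m ≤ n + m - 1)]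
    congr 1
    omega
  have h2 : (n + m - 3).choose (m - 2) = (n + m - 3).choose (n - 1) := by
    rw [← Nat.choose_symm (by omega : m - 2 ≤ n + m - 3)]
    congr 1
    omega
  rw [← hkerrank]
  omega
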